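/- Let q ≥ 0 and r > 0 be reals, and let W, V : ℝ → ℝ be Borel measurable, locally bounded functions that vanish on (−∞,0) and satisfy the convolution identity V(x) = W(x) + r·∫₀ˣ V(x−y)·W(y) dy for every x ≥ 0. Then for every a < 0 and every x ∈ ℝ, W(x−a) + r·∫₀ˣ V(x−y)·W(y−a) dy = V(x−a) − r·∫₀^{−a} V(x−a−u)·W(u) du. -/

import Mathlib

open MeasureTheory Filter Set

lemma ii_bdd {f : ℝ → ℝ} (hf : Measurable f) {s t C : ℝ}
    (h : ∀ y ∈ Set.uIcc s t, |f y| ≤ C) : IntervalIntegrable f volume s t := by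
  rw [intervalIntegrable_iff]
  refine Integrable.mono' (g := fun _ => C) (integrableOn_const measure_Ioc_lt_top.ne)
    hf.aestronglyMeasurable ?_
  filter_upwards [ae_restrict_mem measurableSet_uIoc] with y hy
  exact h y (uIoc_subset_uIcc hy)

lemma ii_prod (V W : ℝ → ℝ) (hVm : Measurable V) (hWm : Measurable W)
    (hWloc : ∀ K : Set ℝ, IsCompact K → ∃ C, ∀ x ∈ K, |W x| ≤ C)
    (hVloc : ∀ K : Set ℝ, IsCompact K → ∃ C, ∀ x ∈ K, |V x| ≤ C)
    (c s t : ℝ) :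
    IntervalIntegrable (fun y => V (c - y) * W y) volume s t := by
  have hK1 : IsCompact ((fun y => c - y) '' Set.uIcc s t) :=
    (isCompact_uIcc).image (by continuity)
  obtain ⟨C1, hC1⟩ := hVloc _ hK1
  obtain ⟨C2, hC2⟩ := hWloc _ isCompact_uIcc
  refine ii_bdd ((hVm.comp (measurable_const.sub measurable_id)).mul hWm) (C := C1 * C2) ?_
  intro y hy
  have h1 : |V (c - y)| ≤ C1 := hC1 _ ⟨y, hy, rfl⟩
  have h2 : |W y| ≤ C2 := hC2 _ hy
  calc |V (c - y) * W y| = |V (c - y)| * |W y| := abs_mul _ _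
    _ ≤ C1 * C2 := mul_le_mul h1 h2 (abs_nonneg _) ((abs_nonneg _).trans h1)

/-- alternative representation of `W_a^{(q,r)}`. -/
theorem stmt_0 (q r : ℝ) (hq : 0 ≤ q) (hr : 0 < r) (W V : ℝ → ℝ)
    (hWm : Measurable W) (hVm : Measurable V)
    (hWloc : ∀ K : Set ℝ, IsCompact K → ∃ C, ∀ x ∈ K, |W x| ≤ C)
    (hVloc : ∀ K : Set ℝ, IsCompact K → ∃ C, ∀ x ∈ K, |V x| ≤ C)
    (hW0 : ∀ x < 0, W x = 0) (hV0 : ∀ x < 0, V x = 0)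
    (hconv : ∀ x ≥ (0:ℝ), V x = W x + r * ∫ y in (0:ℝ)..x, V (x - y) * W y) :
    ∀ a < 0, ∀ x : ℝ,
      W (x - a) + r * ∫ y in (0:ℝ)..x, V (x - y) * W (y - a)
        = V (x - a) - r * ∫ u in (0:ℝ)..(-a), V (x - a - u) * W u := by
  intro a ha x
  by_cases hx : 0 ≤ x - a
  · have hc := hconv (x - a) hx
    have hsub : (∫ y in (0:ℝ)..x, V (x - y) * W (y - a))
        = ∫ y in (-a)..(x - a), V (x - a - y) * W y := by
      have := intervalIntegral.integral_comp_sub_right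
        (a := (0:ℝ)) (b := x) (fun y => V (x - a - y) * W y) a
      simp only [zero_sub] at this
      rw [← this]
      congr 1
      ext y
      congr 2
      ring
    have hsplit : (∫ y in (0:ℝ)..(-a), V (x - a - y) * W y)
        + (∫ y in (-a)..(x - a), V (x - a - y) * W y)
        = ∫ y in (0:ℝ)..(x - a), V (x - a - y) * W y :=
      intervalIntegral.integral_add_adjacent_intervals
        (ii_prod V W hVm hWm hWloc hVloc _ _ _)
        (ii_prod V W hVm hWm hWloc hVloc _ _ _)
    rw [hsub, hc, ← hsplit]
    ring
  · push_neg at hx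
    have h1 : (∫ y in (0:ℝ)..x, V (x - y) * W (y - a)) = 0 := by
      have e1 := intervalIntegral.integral_congr_ae (μ := volume) (a := (0:ℝ)) (b := x)
        (f := fun y => V (x - y) * W (y - a)) (g := fun _ => (0:ℝ)) ?_
      · simpa using e1
      · filter_upwards with y hy
        have hxlt : x < 0 := by linarith
        rw [Set.uIoc_comm, Set.uIoc_of_le hxlt.le] at hy
        exact mul_eq_zero.2 (Or.inl (hV0 _ (by linarith [hy.1])))
    have h2 : (∫ u in (0:ℝ)..(-a), V (x - a - u) * W u) = 0 := by
      have e2 := intervalIntegral.integral_congr_ae (μ := volume) (a := (0:ℝ)) (b := -a)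
        (f := fun u => V (x - a - u) * W u) (g := fun _ => (0:ℝ)) ?_
      · simpa using e2
      · filter_upwards with u hu
        rw [Set.uIoc_of_le (by linarith : (0:ℝ) ≤ -a)] at hu
        exact mul_eq_zero.2 (Or.inl (hV0 _ (by linarith [hu.1])))
    rw [h1, h2, hW0 _ hx, hV0 _ hx]
    ring
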